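/- Let m ≥ 1, let σ be a generator of Gal(𝔽_{q^m}/𝔽_q), and let a_1,…,a_{q−1} ∈ 𝔽_{q^m}^* have pairwise distinct norms N_{q^m/q}(a_i). Then for every pair (f_0, f_1) ∈ 𝔽_{q^m}² with (f_0, f_1) ≠ (0,0) one has Σ_{i=1}^{q−1} dim_{𝔽_q}({ f_0·y + f_1·a_i·σ(y) : y ∈ 𝔽_{q^m} }) + ε_0 + ε_∞ = (q−1)·m + 1, where ε_0 = 1 if f_0 ≠ 0 and 0 otherwise, and ε_∞ = 1 if f_1 ≠ 0 and 0 otherwise. In other words, the 2-dimensional doubly-extended linearized Reed-Solomon code (with full-length blocks n = m, t = q−1 blocks, and the two extension blocks) is a one-weight maximum sum-rank distance code: every nonzero codeword has sum-rank weight (q−1)m + 1. -/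

import Mathlib

set_option linter.unusedSectionVars false

section Aux

variable {Fq Fqm : Type} [Field Fq] [Field Fqm] [Fintype Fq] [Fintype Fqm] [Algebra Fq Fqm]

/-- Elements fixed by a generator of the automorphism group lie in the base field. -/
lemma DELRS.fixed_mem (σ : Fqm ≃ₐ[Fq] Fqm)
    (hσ : ∀ τ : Fqm ≃ₐ[Fq] Fqm, τ ∈ Subgroup.zpowers σ)
    {x : Fqm} (hx : σ x = x) : ∃ c : Fq, algebraMap Fq Fqm c = x := by
  have hst : σ ∈ MulAction.stabilizer (Fqm ≃ₐ[Fq] Fqm) x := hx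
  have htau : ∀ τ : Fqm ≃ₐ[Fq] Fqm, τ • x = x := fun τ =>
    Subgroup.zpowers_le.mpr hst (hσ τ)
  have h := IsGalois.fixedField_fixingSubgroup (⊥ : IntermediateField Fq Fqm)
  have hmem : x ∈ IntermediateField.fixedField
      (IntermediateField.fixingSubgroup (⊥ : IntermediateField Fq Fqm)) := fun g => htau g.1
  rw [h, IntermediateField.mem_bot] at hmem
  exact hmem

lemma DELRS.sigma_pow (σ : Fqm ≃ₐ[Fq] Fqm)
    (hσ : ∀ τ : Fqm ≃ₐ[Fq] Fqm, τ ∈ Subgroup.zpowers σ) (m : ℕ)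
    (hm : Module.finrank Fq Fqm = m) : σ ^ m = 1 := by
  have h1 : orderOf σ = Nat.card (Fqm ≃ₐ[Fq] Fqm) :=
    orderOf_eq_card_of_forall_mem_zpowers hσ
  have h2 : Fintype.card (Fqm ≃ₐ[Fq] Fqm) = Module.finrank Fq Fqm :=
    by rw [← Nat.card_eq_fintype_card]; exact IsGalois.card_aut_eq_finrank Fq Fqm
  rw [← hm, ← h2, ← Nat.card_eq_fintype_card, ← h1]
  exact pow_orderOf_eq_one σ

lemma DELRS.Nshift (σ : Fqm ≃ₐ[Fq] Fqm) (m : ℕ) (hm1 : 1 ≤ m) (hs : σ ^ m = 1)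
    (y : Fqm) :
    ∏ l ∈ Finset.range m, (σ ^ l) (σ y) = ∏ l ∈ Finset.range m, (σ ^ l) y := by
  obtain ⟨k, rfl⟩ : ∃ k, m = k + 1 := ⟨m - 1, by omega⟩
  have hstep : ∀ l, (σ ^ l) (σ y) = (σ ^ (l + 1)) y := fun l => by
    rw [pow_succ]; rfl
  simp_rw [hstep]
  rw [Finset.prod_range_succ, Finset.prod_range_succ']
  have h1 : (σ ^ (k + 1)) y = y := by rw [hs]; rfl
  have h2 : (σ ^ (0 : ℕ)) y = y := by rw [pow_zero]; rfl
  rw [h1, h2]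

end Aux

/-- The `Fq`-linear map `y ↦ f₀·y + f₁·a·σ(y)` on `Fqm`. -/
noncomputable def combMap (Fq Fqm : Type) [Field Fq] [Field Fqm] [Algebra Fq Fqm]
    (σ : Fqm ≃ₐ[Fq] Fqm) (f₀ f₁ a : Fqm) : Fqm →ₗ[Fq] Fqm where
  toFun y := f₀ * y + f₁ * (a * σ y)
  map_add' x y := by simp only [map_add, mul_add]; ring
  map_smul' c x := by
    simp only [_root_.map_smul, mul_smul_comm, smul_add, RingHom.id_apply]

/-- 2-dimensional doubly-extended linearized Reed–Solomon codes are
one-weight MSRD: for every `(f₀, f₁) ≠ (0,0)` the sum of the `Fq`-dimensions of the images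
of `y ↦ f₀ y + f₁ aᵢ σ(y)` plus the two extension contributions equals `(q-1)·m + 1`. -/
theorem doublyExtendedLRS_one_weight
    (Fq Fqm : Type) [Field Fq] [Field Fqm] [Fintype Fq] [Fintype Fqm] [Algebra Fq Fqm]
    [DecidableEq Fqm]
    (q m : ℕ) (hq : Fintype.card Fq = q) (hm : Module.finrank Fq Fqm = m) (hm1 : 1 ≤ m)
    (σ : Fqm ≃ₐ[Fq] Fqm) (hσ : ∀ τ : Fqm ≃ₐ[Fq] Fqm, τ ∈ Subgroup.zpowers σ)
    (a : Fin (q - 1) → Fqm) (ha0 : ∀ i, a i ≠ 0)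
    (hnorm : ∀ i j : Fin (q - 1),
      (∏ l ∈ Finset.range m, (σ ^ l) (a i)) = (∏ l ∈ Finset.range m, (σ ^ l) (a j)) → i = j)
    (f₀ f₁ : Fqm) (hf : (f₀, f₁) ≠ (0, 0)) :
    (∑ i : Fin (q - 1),
        Module.finrank Fq (LinearMap.range (combMap Fq Fqm σ f₀ f₁ (a i))))
      + (if f₀ ≠ 0 then 1 else 0) + (if f₁ ≠ 0 then 1 else 0)
      = (q - 1) * m + 1 := by
  classical
  have hq2 : 2 ≤ q := hq ▸ Fintype.one_lt_card
  set L : Fin (q - 1) → (Fqm →ₗ[Fq] Fqm) := fun i => combMap Fq Fqm σ f₀ f₁ (a i) with hL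
  have hLapp : ∀ i y, L i y = f₀ * y + f₁ * (a i * σ y) := fun i y => rfl
  have hrank : ∀ i, Module.finrank Fq (LinearMap.range (L i))
      + Module.finrank Fq (LinearMap.ker (L i)) = m := fun i => by
    rw [← hm]; exact LinearMap.finrank_range_add_finrank_ker (L i)
  have hcard : Fintype.card (Fin (q - 1)) = q - 1 := Fintype.card_fin _
  -- the case where one of f₀, f₁ vanishes: all maps are injective
  have hinj_case : ∀ (_ : ∀ i, LinearMap.ker (L i) = ⊥),
      (∑ i : Fin (q - 1), Module.finrank Fq (LinearMap.range (L i))) = (q - 1) * m := by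
    intro hinj
    have h : ∀ i, Module.finrank Fq (LinearMap.range (L i)) = m := fun i => by
      have := hrank i
      rw [hinj i, finrank_bot] at this
      omega
    simp [h, Finset.sum_const, hcard, mul_comm]
  by_cases hf₁ : f₁ = 0
  · have hf₀ : f₀ ≠ 0 := by
      intro h; exact hf (by rw [h, hf₁])
    have hker : ∀ i, LinearMap.ker (L i) = ⊥ := fun i => by
      rw [LinearMap.ker_eq_bot']
      intro y hy
      rw [hLapp, hf₁] at hy
      simpa [hf₀] using hy
    rw [hinj_case hker]
    simp [hf₀, hf₁]
  by_cases hf₀ : f₀ = 0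
  · have hker : ∀ i, LinearMap.ker (L i) = ⊥ := fun i => by
      rw [LinearMap.ker_eq_bot']
      intro y hy
      rw [hLapp, hf₀] at hy
      simp only [zero_mul, zero_add, mul_eq_zero] at hy
      rcases hy with h | h | h
      · exact absurd h hf₁
      · exact absurd h (ha0 i)
      · exact σ.injective (by simpa using h)
    rw [hinj_case hker]
    simp [hf₀, hf₁]
  -- main case: f₀ ≠ 0 and f₁ ≠ 0
  have hs : σ ^ m = 1 := DELRS.sigma_pow σ hσ m hm
  -- the norm map on Fqm
  set Nf : Fqm → Fqm := fun y => ∏ l ∈ Finset.range m, (σ ^ l) y with hNf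
  have hNmul : ∀ x y, Nf (x * y) = Nf x * Nf y := fun x y => by
    simp only [hNf, map_mul, Finset.prod_mul_distrib]
  have hNone : Nf 1 = 1 := by simp [hNf]
  have hNs : ∀ y, Nf (σ y) = Nf y := fun y => DELRS.Nshift σ m hm1 hs y
  have hNfix : ∀ y, σ (Nf y) = Nf y := fun y => by
    simp only [hNf]
    rw [map_prod]
    have h : ∀ l ∈ Finset.range m, σ ((σ ^ l) y) = (σ ^ l) (σ y) := fun l _ => by
      rw [← AlgEquiv.mul_apply, ← pow_succ', pow_succ, AlgEquiv.mul_apply]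
    rw [Finset.prod_congr rfl h]
    exact hNs y
  have hNne : ∀ y : Fqm, y ≠ 0 → Nf y ≠ 0 := fun y hy => by
    simp only [hNf]
    apply Finset.prod_ne_zero_iff.mpr
    intro l _ h
    exact hy ((σ ^ l).injective (by simpa using h))
  -- units-level homomorphisms
  set NU : Fqmˣ →* Fqmˣ :=
    ∏ l ∈ Finset.range m, Units.map ((σ ^ l : Fqm ≃ₐ[Fq] Fqm) : Fqm →* Fqm) with hNU
  have hNUcoe : ∀ u : Fqmˣ, ((NU u : Fqm)) = Nf (u : Fqm) := fun u => by
    rw [hNU, MonoidHom.finset_prod_apply, hNf]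
    push_cast [Units.coe_map]
    rfl
  set φ : Fqmˣ →* Fqmˣ := Units.map (σ : Fqm →* Fqm) / MonoidHom.id _ with hφ
  have hφcoe : ∀ u : Fqmˣ, ((φ u : Fqm)) = σ (u : Fqm) * ((u⁻¹ : Fqmˣ) : Fqm) := fun u => by
    rw [hφ]
    simp [div_eq_mul_inv, Units.coe_map]
  have hkerφ : ∀ u : Fqmˣ, u ∈ MonoidHom.ker φ ↔ σ (u : Fqm) = (u : Fqm) := fun u => by
    rw [MonoidHom.mem_ker, Units.ext_iff, hφcoe]
    constructor
    · intro h
      have h2 := congrArg (· * (u : Fqm)) h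
      simpa [mul_assoc] using h2
    · intro h
      rw [h]
      simp
  -- cardinalities
  have cardU : Nat.card Fqmˣ = q ^ m - 1 := by
    rw [Nat.card_eq_fintype_card, Fintype.card_units, Module.card_eq_pow_finrank (K := Fq), hq, hm]
  have hprod : ∀ f : Fqmˣ →* Fqmˣ,
      Nat.card (MonoidHom.range f) * Nat.card (MonoidHom.ker f) = q ^ m - 1 := fun f => by
    rw [← cardU, Subgroup.card_eq_card_quotient_mul_card_subgroup (MonoidHom.ker f)]
    congr 1
    exact (Nat.card_congr (QuotientGroup.quotientKerEquivRange f).toEquiv).symm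
  -- the kernel of φ consists of the units of the base field
  have hkerφcard : Nat.card (MonoidHom.ker φ) = q - 1 := by
    set g : Fqˣ → ↥(MonoidHom.ker φ) := fun c =>
      ⟨Units.map (algebraMap Fq Fqm : Fq →* Fqm) c,
        (hkerφ _).mpr (by simp [Units.coe_map])⟩ with hg
    have hgbij : Function.Bijective g := by
      constructor
      · intro c d h
        have h2 : (algebraMap Fq Fqm) (c : Fq) = (algebraMap Fq Fqm) (d : Fq) := by
          have h3 := congrArg (fun x : ↥(MonoidHom.ker φ) => ((x : Fqmˣ) : Fqm)) h
          simpa [hg, Units.coe_map] using h3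
        exact Units.ext ((algebraMap Fq Fqm).injective h2)
      · rintro ⟨u, hu⟩
        obtain ⟨c, hc⟩ := DELRS.fixed_mem σ hσ ((hkerφ u).mp hu)
        have hc0 : c ≠ 0 := by
          intro h
          rw [h, map_zero] at hc
          exact u.ne_zero hc.symm
        refine ⟨Units.mk0 c hc0, ?_⟩
        apply Subtype.ext
        apply Units.ext
        simpa [hg, Units.coe_map] using hc
    rw [← Nat.card_congr (Equiv.ofBijective g hgbij), Nat.card_eq_fintype_card,
      Fintype.card_units, hq]
  -- the map i ↦ N(aᵢ) into ker φ is bijective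
  set au : Fin (q - 1) → Fqmˣ := fun i => Units.mk0 (a i) (ha0 i) with hau
  have hNUker : ∀ u : Fqmˣ, NU u ∈ MonoidHom.ker φ := fun u =>
    (hkerφ _).mpr (by rw [hNUcoe]; exact hNfix _)
  set ν : Fin (q - 1) → ↥(MonoidHom.ker φ) := fun i => ⟨NU (au i), hNUker _⟩ with hν
  have hνinj : Function.Injective ν := by
    intro i j h
    apply hnorm
    have h2 : ((NU (au i) : Fqm)) = ((NU (au j) : Fqm)) := by
      rw [Subtype.ext_iff, Units.ext_iff] at h
      exact h
    rw [hNUcoe, hNUcoe] at h2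
    exact h2
  have hνbij : Function.Bijective ν := by
    rw [Nat.bijective_iff_injective_and_card]
    exact ⟨hνinj, by rw [Nat.card_eq_fintype_card, hcard, hkerφcard]⟩
  -- range NU = ker φ
  have hrangeNU : MonoidHom.range NU = MonoidHom.ker φ := by
    apply le_antisymm
    · rintro v ⟨u, rfl⟩; exact hNUker u
    · intro v hv
      obtain ⟨i, hi⟩ := hνbij.2 ⟨v, hv⟩
      exact ⟨au i, congrArg Subtype.val hi⟩
  have hrangeNUcard : Nat.card (MonoidHom.range NU) = q - 1 := by rw [hrangeNU, hkerφcard]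
  -- range φ = ker NU
  have hrangeφ_le : MonoidHom.range φ ≤ MonoidHom.ker NU := by
    rintro v ⟨u, rfl⟩
    rw [MonoidHom.mem_ker]
    apply Units.ext
    rw [hNUcoe, hφcoe]
    have h2 : Nf (σ (u : Fqm)) * Nf ((u⁻¹ : Fqmˣ) : Fqm) = 1 := by
      rw [hNs, ← hNmul]
      simp [hNone]
    rw [hNmul, h2]
    exact Units.val_one.symm
  have hkerNUcard : Nat.card (MonoidHom.ker NU) = Nat.card (MonoidHom.range φ) := by
    have h1 := hprod NU
    have h2 := hprod φ
    rw [hrangeNUcard] at h1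
    rw [hkerφcard] at h2
    have hq1 : 0 < q - 1 := by omega
    rw [mul_comm] at h1
    exact Nat.eq_of_mul_eq_mul_right hq1 (h1.trans h2.symm)
  have hrangeφ : MonoidHom.range φ = MonoidHom.ker NU := by
    apply SetLike.coe_injective
    apply Set.eq_of_subset_of_ncard_le hrangeφ_le
    rw [← Nat.card_coe_set_eq, ← Nat.card_coe_set_eq,
      SetLike.coe_sort_coe, SetLike.coe_sort_coe, hkerNUcard]
  -- per-block analysis
  set z : Fqm := -f₀ / f₁ with hz
  have hz0 : z ≠ 0 := div_ne_zero (neg_ne_zero.mpr hf₀) hf₁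
  set c : Fin (q - 1) → Fqm := fun i => z / a i with hc
  have hc0 : ∀ i, c i ≠ 0 := fun i => div_ne_zero hz0 (ha0 i)
  have hca : ∀ i, c i * a i = z := fun i => div_mul_cancel₀ z (ha0 i)
  have hkey : ∀ i, f₁ * (a i * c i) = -f₀ := fun i => by
    have h1 : a i * c i = z := by rw [mul_comm]; exact hca i
    rw [h1, hz]
    field_simp
  have hker_iff : ∀ i (y : Fqm), y ∈ LinearMap.ker (L i) ↔ σ y = c i * y := by
    intro i y
    rw [LinearMap.mem_ker, hLapp]
    have hne : f₁ * a i ≠ 0 := mul_ne_zero hf₁ (ha0 i)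
    have e1 : f₁ * (a i * (c i * y)) = -(f₀ * y) := by
      calc f₁ * (a i * (c i * y)) = f₁ * (a i * c i) * y := by ring
      _ = -f₀ * y := by rw [hkey i]
      _ = -(f₀ * y) := by ring
    constructor
    · intro h
      have h2 : f₁ * (a i * σ y) = -(f₀ * y) := eq_neg_of_add_eq_zero_right h
      have h3 : (f₁ * a i) * σ y = (f₁ * a i) * (c i * y) := by
        calc (f₁ * a i) * σ y = f₁ * (a i * σ y) := by ring
        _ = -(f₀ * y) := h2
        _ = f₁ * (a i * (c i * y)) := e1.symm
        _ = (f₁ * a i) * (c i * y) := by ring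
      exact mul_left_cancel₀ hne h3
    · intro h
      rw [h, e1]
      ring
  have hNcrit : ∀ i, LinearMap.ker (L i) ≠ ⊥ ↔ Nf (a i) = Nf z := by
    intro i
    constructor
    · intro hne
      obtain ⟨y, hy, hy0⟩ := (Submodule.ne_bot_iff _).mp hne
      have hsy := (hker_iff i y).mp hy
      have h1 : Nf (c i) * Nf y = Nf y := by rw [← hNmul, ← hsy, hNs]
      have h2 : Nf (c i) = 1 :=
        mul_right_cancel₀ (hNne y hy0) (by rw [h1, one_mul])
      calc Nf (a i) = Nf (c i) * Nf (a i) := by rw [h2, one_mul]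
      _ = Nf (c i * a i) := (hNmul _ _).symm
      _ = Nf z := by rw [hca i]
    · intro heq
      have h3 : Nf (c i) * Nf (a i) = Nf (a i) := by
        rw [← hNmul, hca i, heq]
      have h2 : Nf (c i) = 1 := mul_right_cancel₀ (hNne _ (ha0 i)) (by rw [h3, one_mul])
      have hcu : Units.mk0 (c i) (hc0 i) ∈ MonoidHom.ker NU := by
        rw [MonoidHom.mem_ker]
        apply Units.ext
        rw [hNUcoe]
        exact h2
      rw [← hrangeφ] at hcu
      obtain ⟨u, hu⟩ := hcu
      have hu2 : σ (u : Fqm) * ((u⁻¹ : Fqmˣ) : Fqm) = c i := by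
        have h4 : ((φ u : Fqm)) = c i := by rw [hu]; rfl
        rw [hφcoe] at h4
        exact h4
      have hyσ : σ (u : Fqm) = c i * (u : Fqm) := by
        have h5 : σ (u : Fqm) * ((u⁻¹ : Fqmˣ) : Fqm) * (u : Fqm) = c i * (u : Fqm) := by
          rw [hu2]
        calc σ (u : Fqm) = σ (u : Fqm) * (((u⁻¹ : Fqmˣ) : Fqm) * (u : Fqm)) := by
              rw [Units.inv_mul, mul_one]
        _ = σ (u : Fqm) * ((u⁻¹ : Fqmˣ) : Fqm) * (u : Fqm) := by ring
        _ = c i * (u : Fqm) := h5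
      exact (Submodule.ne_bot_iff _).mpr ⟨(u : Fqm), (hker_iff i _).mpr hyσ, u.ne_zero⟩
  -- there is a unique block with nontrivial kernel
  obtain ⟨i₀, hi₀⟩ : ∃ i₀, Nf (a i₀) = Nf z := by
    obtain ⟨i, hi⟩ := hνbij.2 ⟨NU (Units.mk0 z hz0), hNUker _⟩
    refine ⟨i, ?_⟩
    have h2 : ((NU (au i) : Fqm)) = ((NU (Units.mk0 z hz0) : Fqm)) := by
      rw [Subtype.ext_iff, Units.ext_iff] at hi
      exact hi
    rw [hNUcoe, hNUcoe] at h2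
    simpa [hau] using h2
  have hkdim : ∀ i, Module.finrank Fq (LinearMap.ker (L i)) = if i = i₀ then 1 else 0 := by
    intro i
    by_cases hii : i = i₀
    · subst hii
      rw [if_pos rfl]
      have hne : LinearMap.ker (L i) ≠ ⊥ := (hNcrit i).mpr hi₀
      obtain ⟨y₀, hy₀mem, hy₀⟩ := (Submodule.ne_bot_iff _).mp hne
      have hspan : LinearMap.ker (L i) = Submodule.span Fq {y₀} := by
        apply le_antisymm
        · intro y hy
          by_cases hy0 : y = 0
          · simp [hy0]
          have h1 := (hker_iff i y).mp hy
          have h2 := (hker_iff i y₀).mp hy₀mem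
          have hfix : σ (y * y₀⁻¹) = y * y₀⁻¹ := by
            rw [map_mul, h1, map_inv₀, h2, mul_inv]
            rw [show c i * y * ((c i)⁻¹ * y₀⁻¹) = (c i * (c i)⁻¹) * (y * y₀⁻¹) by ring,
              mul_inv_cancel₀ (hc0 i), one_mul]
          obtain ⟨d, hd⟩ := DELRS.fixed_mem σ hσ hfix
          rw [Submodule.mem_span_singleton]
          refine ⟨d, ?_⟩
          rw [Algebra.smul_def, hd]
          field_simp
        · rw [Submodule.span_le, Set.singleton_subset_iff]
          exact hy₀mem
      rw [hspan]
      exact finrank_span_singleton hy₀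
    · rw [if_neg hii]
      have hbot : LinearMap.ker (L i) = ⊥ := by
        by_contra hne
        exact hii (hnorm i i₀ (((hNcrit i).mp hne).trans hi₀.symm))
      rw [hbot, finrank_bot]
  -- assemble the sum
  have hsum : (∑ i : Fin (q - 1), Module.finrank Fq (LinearMap.range (L i))) + 1
      = (q - 1) * m := by
    have h1 : ∑ i : Fin (q - 1), (Module.finrank Fq (LinearMap.range (L i))
        + Module.finrank Fq (LinearMap.ker (L i))) = (q - 1) * m := by
      rw [Finset.sum_congr rfl (fun i _ => hrank i), Finset.sum_const, Finset.card_univ,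
        hcard, smul_eq_mul]
    rw [Finset.sum_add_distrib] at h1
    have h2 : ∑ i : Fin (q - 1), Module.finrank Fq (LinearMap.ker (L i)) = 1 := by
      rw [Finset.sum_congr rfl (fun i _ => hkdim i)]
      simp
    rw [h2] at h1
    exact h1
  rw [if_pos hf₀, if_pos hf₁, ← hsum]
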